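/- Let n, k, t be integers with t ≥ 1, k ≥ 2 and t + k ≤ n. Then Σ_{l=n−k−t}^{n−t−1} (−1)^l · C(n−2, l) · C(l, n−k−t) · C(n−l−2, t−1) = 0, where C(a,b) denotes the binomial coefficient a choose b. -/

import Mathlib

/-- For integers `n, k, t` with `t ≥ 1`, `k ≥ 2` and `t + k ≤ n`,
`Σ_{l=n−k−t}^{n−t−1} (−1)^l · C(n−2,l) · C(l,n−k−t) · C(n−l−2,t−1) = 0`. -/
theorem alternating_triple_binomial_sum_eq_zero (n k t : ℕ)
    (ht : 1 ≤ t) (hk : 2 ≤ k) (hn : t + k ≤ n) :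
    ∑ l ∈ Finset.Icc (n - k - t) (n - t - 1),
      ((-1 : ℤ) ^ l * (n - 2).choose l * l.choose (n - k - t) * (n - l - 2).choose (t - 1))
      = 0 := by
  obtain ⟨a, rfl⟩ : ∃ a, n = a + k + t := ⟨n - k - t, by omega⟩
  have h1 : a + k + t - k - t = a := by omega
  have h2 : a + k + t - t - 1 = a + (k - 1) := by omega
  rw [h1, h2, ← Finset.Ico_add_one_right_eq_Icc, Finset.sum_Ico_eq_sum_range]
  have hr : a + (k - 1) + 1 - a = k := by omega
  rw [hr]
  have key : ∀ j ∈ Finset.range k,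
      ((-1 : ℤ) ^ (a + j) * ((a + k + t - 2).choose (a + j)) * ((a + j).choose a)
          * ((a + k + t - (a + j) - 2).choose (t - 1)))
      = ((-1 : ℤ) ^ a * ((a + k + t - 2).choose a) * ((k + t - 2).choose (t - 1)))
          * ((-1 : ℤ) ^ j * ((k - 1).choose j)) := by
    intro j hj
    simp only [Finset.mem_range] at hj
    have hjk : j ≤ k - 1 := by omega
    have e1 : a + k + t - (a + j) - 2 = k + t - 2 - j := by omega
    have e2 : a + k + t - 2 = a + (k + t - 2) := by omega
    rw [e1, e2]
    have h3 : (a + (k + t - 2)).choose (a + j) * (a + j).choose a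
        = (a + (k + t - 2)).choose a * (k + t - 2).choose j := by
      rw [Nat.choose_mul (by omega)]
      congr 2 <;> omega
    have h4 : (k + t - 2).choose j * ((k + t - 2) - j).choose (t - 1)
        = (k + t - 2).choose (t - 1) * (k - 1).choose j := by
      rw [← Nat.choose_symm (show j ≤ k + t - 2 by omega),
        Nat.choose_mul (by omega)]
      have e3 : k + t - 2 - (t - 1) = k - 1 := by omega
      have e4 : k + t - 2 - j - (t - 1) = k - 1 - j := by omega
      rw [e3, e4, Nat.choose_symm hjk]
    have h3' : ((a + (k + t - 2)).choose (a + j) : ℤ) * (a + j).choose a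
        = ((a + (k + t - 2)).choose a : ℤ) * (k + t - 2).choose j := by exact_mod_cast h3
    have h4' : ((k + t - 2).choose j : ℤ) * (((k + t - 2) - j).choose (t - 1) : ℤ)
        = ((k + t - 2).choose (t - 1) : ℤ) * ((k - 1).choose j : ℤ) := by exact_mod_cast h4
    rw [pow_add]
    linear_combination ((-1 : ℤ) ^ a * (-1 : ℤ) ^ j * (((k + t - 2) - j).choose (t - 1) : ℤ)) * h3'
      + ((-1 : ℤ) ^ a * (-1 : ℤ) ^ j * ((a + (k + t - 2)).choose a : ℤ)) * h4'
  have hzero : (∑ j ∈ Finset.range k, (-1 : ℤ) ^ j * ((k - 1).choose j)) = 0 := by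
    have h := Int.alternating_sum_range_choose_of_ne (n := k - 1) (by omega)
    rwa [show k - 1 + 1 = k by omega] at h
  rw [Finset.sum_congr rfl key, ← Finset.mul_sum, hzero, mul_zero]
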